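/- Let k be a field, Q a cancellative additive commutative monoid, and q ∈ Q an element such that the map ℕ → Q, n ↦ n • q, is injective. Regard k[Q] = AddMonoidAlgebra k Q as a module over k[ℕ] = AddMonoidAlgebra k ℕ via the ring homomorphism induced by the additive monoid homomorphism ℕ →+ Q sending n to n • q. Then k[Q] is a torsion-free k[ℕ]-module: for every nonzero f ∈ k[ℕ] and every m ∈ k[Q], if f • m = 0 then m = 0. -/

import Mathlib

/-- In a finite nonempty set `S` in a cancellative monoid, there is an element maximal with
respect to translation by positive multiples of `q`. -/
lemma exists_maximal_wrt_multiples {Q : Type*} [AddCancelCommMonoid Q] (q : Q)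
    (hq : Function.Injective fun n : ℕ => n • q) (S : Finset Q) (hS : S.Nonempty) :
    ∃ x ∈ S, ∀ y ∈ S, ∀ kk : ℕ, y = x + kk • q → kk = 0 := by
  classical
  -- measure: number of elements of `S` reachable from `x` by adding multiples of `q`
  set g : Q → Finset Q := fun x => S.filter (fun y => ∃ kk : ℕ, y = x + kk • q) with hg
  obtain ⟨x, hxS, hxmin⟩ := S.exists_min_image (fun x => (g x).card) hS
  refine ⟨x, hxS, fun y hyS kk hyk => ?_⟩
  by_contra hkk
  -- then `g y ⊂ g x`, contradicting minimality
  have hsub : g y ⊆ g x := by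
    intro z hz
    rw [hg, Finset.mem_filter] at hz ⊢
    obtain ⟨hzS, j, hj⟩ := hz
    exact ⟨hzS, kk + j, by rw [hj, hyk, add_assoc, ← add_smul]⟩
  have hxgx : x ∈ g x := by
    rw [hg, Finset.mem_filter]
    exact ⟨hxS, 0, by simp⟩
  have hxgy : x ∉ g y := by
    rw [hg, Finset.mem_filter]
    rintro ⟨-, j, hj⟩
    rw [hyk, add_assoc, ← add_smul] at hj
    have h0 : x + (0 : ℕ) • q = x + (kk + j) • q := by simpa using hj
    have := hq (add_left_cancel h0)
    omega
  have hlt : (g x).card ≤ (g y).card := hxmin y hyS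
  have hle : (g y).card < (g x).card :=
    Finset.card_lt_card (Finset.ssubset_iff_of_subset hsub |>.mpr ⟨x, hxgx, hxgy⟩)
  omega

/-- Key step in Lemma 2.8: for a field `k`, a cancellative commutative monoid `Q`, and an element
`q ∈ Q` generating a free submonoid of rank one, `k[Q]` is a torsion-free module over
`k[ℕ] ≅ k[t]`. -/
theorem torsionFree_monoidAlgebra_of_rank_one
    (k : Type*) [Field k] {Q : Type*} [AddCancelCommMonoid Q] (q : Q)
    (hq : Function.Injective fun n : ℕ => n • q) :
    let F : AddMonoidAlgebra k ℕ →+* AddMonoidAlgebra k Q :=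
      AddMonoidAlgebra.mapDomainRingHom k (multiplesHom Q q)
    letI := F.toAlgebra
    ∀ f : AddMonoidAlgebra k ℕ, f ≠ 0 →
      ∀ m : AddMonoidAlgebra k Q, f • m = 0 → m = 0 := by
  classical
  intro F f hf m hfm
  letI : Algebra (AddMonoidAlgebra k ℕ) (AddMonoidAlgebra k Q) := F.toAlgebra
  by_contra hm
  -- pick the top degree of `f`
  have hfs : f.coeff.support.Nonempty := Finsupp.support_nonempty_iff.mpr (AddMonoidAlgebra.coeff_eq_zero.not.mpr hf)
  set d : ℕ := f.coeff.support.max' hfs with hd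
  have hdmem : d ∈ f.coeff.support := f.coeff.support.max'_mem hfs
  have hdmax : ∀ n ∈ f.coeff.support, n ≤ d := fun n hn => f.coeff.support.le_max' n hn
  -- pick a maximal element of the support of `m`
  have hms : m.coeff.support.Nonempty := Finsupp.support_nonempty_iff.mpr (AddMonoidAlgebra.coeff_eq_zero.not.mpr hm)
  obtain ⟨x, hxS, hxmax⟩ := exists_maximal_wrt_multiples q hq m.coeff.support hms
  -- compute the coefficient of `f • m` at `d • q + x`
  have hsmul : f • m = F f * m := Algebra.smul_def f m
  have hFf : (F f).coeff = Finsupp.mapDomain (fun n : ℕ => n • q) f.coeff := by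
    rfl
  have hcoeff : (F f * m).coeff (d • q + x) = f.coeff d * m.coeff x := by
    rw [AddMonoidAlgebra.coeff_mul, hFf,
      Finsupp.sum_mapDomain_index_inj (f := fun n : ℕ => n • q) hq]
    have hinner : ∀ n ∈ f.coeff.support,
        (m.coeff.sum fun a₂ b₂ => if n • q + a₂ = d • q + x then f.coeff n * b₂ else 0) =
          if n = d then f.coeff d * m.coeff x else 0 := by
      intro n hn
      have hnd : n ≤ d := hdmax n hn
      by_cases hnd' : n = d
      · subst hnd'
        rw [if_pos rfl]
        have hiff : ∀ a₂, (d • q + a₂ = d • q + x) ↔ a₂ = x := fun a₂ => add_right_inj _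
        simp only [hiff]
        rw [Finsupp.sum, Finset.sum_ite_eq' m.coeff.support x (fun y => f.coeff d * m.coeff y), if_pos hxS]
      · rw [if_neg hnd']
        apply Finset.sum_eq_zero
        intro y hyS
        show (if n • q + y = d • q + x then f.coeff n * m.coeff y else 0) = 0
        rw [if_neg]
        intro hcond
        -- `n < d`, so `y = x + (d - n) • q`, contradicting maximality of `x`
        have hdn : d • q = n • q + (d - n) • q := by
          rw [← add_smul]
          congr 1
          omega
        rw [hdn, add_assoc] at hcond
        have hy : y = (d - n) • q + x := add_left_cancel hcond
        have := hxmax y hyS (d - n) (by rw [hy, add_comm])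
        omega
    calc f.coeff.sum (fun n b => m.coeff.sum fun a₂ b₂ => if n • q + a₂ = d • q + x then b * b₂ else 0)
        = ∑ n ∈ f.coeff.support, if n = d then f.coeff d * m.coeff x else 0 := by
          rw [Finsupp.sum]
          exact Finset.sum_congr rfl hinner
      _ = f.coeff d * m.coeff x := by
          rw [Finset.sum_ite_eq' f.coeff.support d (fun _ => f.coeff d * m.coeff x), if_pos hdmem]
  rw [hsmul] at hfm
  rw [hfm] at hcoeff
  have hfd : f.coeff d ≠ 0 := Finsupp.mem_support_iff.mp hdmem
  have hmx : m.coeff x ≠ 0 := Finsupp.mem_support_iff.mp hxS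
  have h0 : f.coeff d * m.coeff x = 0 := by simpa using hcoeff.symm
  exact hmx ((mul_eq_zero.mp h0).resolve_left hfd)
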